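/- Let p ≥ 1 and k₁, k₂ ≥ 1 be integers and let q ∈ ℤ. Define N₁(k₁, k₂; p, q) = #{(a, b) ∈ ℤ² : a + qb ≡ 0 (mod p), |a| < k₁, |b| < k₂} and N₂(k₁, k₂; p, q) = #{(a, b) ∈ ℤ² : a + qb ≡ 0 (mod p), and either (|a| < k₁ and |b| = k₂) or (|a| = k₁ and |b| < k₂)}. Then N₁(k₁, k₂; p, q) is odd and N₂(k₁, k₂; p, q) is even. -/

import Mathlib

/-- A finite set closed under a fixed-point-free involution has even cardinality. -/
lemma even_card_invol {α : Type*} [DecidableEq α] (f : α → α)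
    (h2 : ∀ x, f (f x) = x) :
    ∀ s : Finset α, (∀ x ∈ s, f x ∈ s) → (∀ x ∈ s, f x ≠ x) → Even s.card := by
  intro s
  induction s using Finset.strongInduction with
  | _ s ih =>
    intro h1 h3
    rcases s.eq_empty_or_nonempty with rfl | ⟨x, hx⟩
    · simp
    · have hfx := h1 x hx
      have hne := h3 x hx
      have hsubset : ({x, f x} : Finset α) ⊆ s := by
        intro y hy; simp at hy; rcases hy with rfl | rfl <;> assumption
      have hss : s \ {x, f x} ⊂ s := by
        refine Finset.sdiff_ssubset hsubset ?_
        exact ⟨x, by simp⟩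
      have heven : Even (s \ {x, f x}).card := by
        refine ih _ hss ?_ ?_
        · intro y hy
          rw [Finset.mem_sdiff] at hy ⊢
          refine ⟨h1 y hy.1, ?_⟩
          have hy2 := hy.2
          simp only [Finset.mem_insert, Finset.mem_singleton] at hy2 ⊢
          push_neg at hy2 ⊢
          constructor
          · intro h; apply hy2.2; rw [← h2 y, h]
          · intro h
            apply hy2.1
            have := congrArg f h; rwa [h2, h2] at this
        · intro y hy
          exact h3 y (Finset.mem_sdiff.mp hy).1
      have hcard2 : ({x, f x} : Finset α).card = 2 := by
        rw [Finset.card_insert_of_notMem (by simp [Ne.symm hne]), Finset.card_singleton]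
      have := Finset.card_sdiff_add_card_eq_card hsubset
      rw [hcard2] at this
      rw [← this]
      exact heven.add even_two

/-- Set version. -/
lemma even_ncard_invol {α : Type*} [DecidableEq α] (f : α → α)
    (h2 : ∀ x, f (f x) = x) (s : Set α) (hs : s.Finite)
    (h1 : ∀ x ∈ s, f x ∈ s) (h3 : ∀ x ∈ s, f x ≠ x) : Even s.ncard := by
  rw [Set.ncard_eq_toFinset_card _ hs]
  refine even_card_invol f h2 _ ?_ ?_
  · intro x hx
    rw [Set.Finite.mem_toFinset] at hx ⊢
    exact h1 x hx
  · intro x hx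
    rw [Set.Finite.mem_toFinset] at hx
    exact h3 x hx

/-- **Statement 13.** Let `p ≥ 1`, `k₁, k₂ ≥ 1` be integers and `q ∈ ℤ`.  Then
the number `N₁(k₁, k₂; p, q)` of integer solutions `(a, b)` of
`a + qb ≡ 0 (mod p)` with `|a| < k₁`, `|b| < k₂` is odd, and the number
`N₂(k₁, k₂; p, q)` of solutions with (`|a| < k₁` and `|b| = k₂`) or
(`|a| = k₁` and `|b| < k₂`) is even. -/
theorem statement13 (p k₁ k₂ q : ℤ) (hp : 1 ≤ p) (hk₁ : 1 ≤ k₁) (hk₂ : 1 ≤ k₂) :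
    Odd (Set.ncard {ab : ℤ × ℤ | p ∣ (ab.1 + q * ab.2) ∧ |ab.1| < k₁ ∧ |ab.2| < k₂}) ∧
    Even (Set.ncard {ab : ℤ × ℤ | p ∣ (ab.1 + q * ab.2) ∧
      ((|ab.1| < k₁ ∧ |ab.2| = k₂) ∨ (|ab.1| = k₁ ∧ |ab.2| < k₂))}) := by
  set f : ℤ × ℤ → ℤ × ℤ := fun ab => (-ab.1, -ab.2) with hf
  have hinv : ∀ x, f (f x) = x := by intro x; simp [hf]
  have hbox : ∀ s : Set (ℤ × ℤ),
      s ⊆ Set.Icc (-k₁) k₁ ×ˢ Set.Icc (-k₂) k₂ → s.Finite := by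
    intro s hsub
    exact Set.Finite.subset ((Set.finite_Icc _ _).prod (Set.finite_Icc _ _)) hsub
  set S₁ : Set (ℤ × ℤ) :=
    {ab : ℤ × ℤ | p ∣ (ab.1 + q * ab.2) ∧ |ab.1| < k₁ ∧ |ab.2| < k₂} with hS₁
  set S₂ : Set (ℤ × ℤ) := {ab : ℤ × ℤ | p ∣ (ab.1 + q * ab.2) ∧
      ((|ab.1| < k₁ ∧ |ab.2| = k₂) ∨ (|ab.1| = k₁ ∧ |ab.2| < k₂))} with hS₂
  have hfin₁ : S₁.Finite := by
    apply hbox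
    rintro ⟨a, b⟩ ⟨_, ha, hb⟩
    rw [abs_lt] at ha hb
    exact ⟨⟨by linarith [ha.1], by linarith [ha.2]⟩, ⟨by linarith [hb.1], by linarith [hb.2]⟩⟩
  have hfin₂ : S₂.Finite := by
    apply hbox
    rintro ⟨a, b⟩ ⟨_, h⟩
    rcases h with ⟨ha, hb⟩ | ⟨ha, hb⟩
    · rw [abs_lt] at ha
      rcases abs_eq (by linarith : (0:ℤ) ≤ k₂) |>.mp hb with rfl | rfl
      · exact ⟨⟨by linarith [ha.1], by linarith [ha.2]⟩, by simp; linarith, by simp⟩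
      · exact ⟨⟨by linarith [ha.1], by linarith [ha.2]⟩, by simp, by simp; linarith⟩
    · rw [abs_lt] at hb
      rcases abs_eq (by linarith : (0:ℤ) ≤ k₁) |>.mp ha with rfl | rfl
      · exact ⟨⟨by simp; linarith, by simp⟩, ⟨by linarith [hb.1], by linarith [hb.2]⟩⟩
      · exact ⟨⟨by simp, by simp; linarith⟩, ⟨by linarith [hb.1], by linarith [hb.2]⟩⟩
  have hclosed₁ : ∀ x ∈ S₁, f x ∈ S₁ := by
    rintro ⟨a, b⟩ ⟨hd, ha, hb⟩
    refine ⟨?_, by simpa [hf] using ha, by simpa [hf] using hb⟩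
    obtain ⟨c, hc⟩ := hd
    exact ⟨-c, by simp only at hc ⊢; rw [mul_neg]; linarith⟩
  have hclosed₂ : ∀ x ∈ S₂, f x ∈ S₂ := by
    rintro ⟨a, b⟩ ⟨hd, h⟩
    refine ⟨?_, ?_⟩
    · obtain ⟨c, hc⟩ := hd
      exact ⟨-c, by simp only at hc ⊢; rw [mul_neg]; linarith⟩
    · simpa [hf] using h
  constructor
  · -- S₁ has (0,0) as unique fixed point
    have hz : ((0 : ℤ), (0 : ℤ)) ∈ S₁ := by
      refine ⟨by simp, by simpa using (show (0:ℤ) < k₁ by omega), by simpa using (show (0:ℤ) < k₂ by omega)⟩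
    have heven : Even (S₁ \ {((0:ℤ), (0:ℤ))}).ncard := by
      refine even_ncard_invol f hinv _ (hfin₁.subset Set.diff_subset) ?_ ?_
      · rintro ⟨a, b⟩ ⟨hm, hne⟩
        refine ⟨hclosed₁ _ hm, ?_⟩
        simp only [Set.mem_singleton_iff, Prod.ext_iff] at hne ⊢
        simp only [hf, neg_eq_zero]
        exact hne
      · rintro ⟨a, b⟩ ⟨hm, hne⟩ heq
        simp only [hf, Prod.ext_iff] at heq
        apply hne
        simp only [Set.mem_singleton_iff, Prod.ext_iff]
        constructor <;> [skip; skip] <;> omega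
    have : (S₁ \ {((0:ℤ), (0:ℤ))}).ncard + 1 = S₁.ncard :=
      Set.ncard_diff_singleton_add_one hz hfin₁
    rw [← this]
    exact heven.add_one
  · refine even_ncard_invol f hinv _ hfin₂ hclosed₂ ?_
    rintro ⟨a, b⟩ ⟨hd, h⟩ heq
    simp only [hf, Prod.ext_iff] at heq
    have ha : a = 0 := by omega
    have hb : b = 0 := by omega
    subst ha hb
    simp only [abs_zero] at h
    omega
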